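/- arXiv:1404.4790 — 2 statements merged into one kernel-verified Lean document; each statement's English description precedes it below -/
import Mathlib

section
/- There exists δ₀ ∈ (0,1) such that for every δ ∈ (0, δ₀], the function F₁ : ℝ → ℝ defined by F₁(s) = −½ s² log s² for |s| ≤ δ (with F₁(0) = 0) and F₁(s) = −½ s²(log δ² + 3) + 2δ|s| − ½δ² for |s| > δ is convex on ℝ, nonnegative, and continuously differentiable. -/
open Real

noncomputable section

lemma tendsto_mul_log_sq :
    Filter.Tendsto (fun s : ℝ => s * Real.log (s ^ 2)) (nhds 0) (nhds 0) := by
  have h0 : Filter.Tendsto (fun s : ℝ => ‖|s| * Real.log |s|‖) (nhds 0) (nhds 0) := by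
    have hc : Continuous fun s : ℝ => |s| * Real.log |s| :=
      Real.continuous_mul_log.comp continuous_abs
    have := (hc.tendsto 0).norm
    simpa using this
  have htend : Filter.Tendsto (fun s : ℝ => 2 * ‖|s| * Real.log |s|‖) (nhds 0) (nhds 0) := by
    simpa using h0.const_mul 2
  refine squeeze_zero_norm ?_ htend
  · intro s
    have h1 : Real.log (s ^ 2) = 2 * Real.log |s| := by
      rw [← Real.log_abs, abs_pow, Real.log_pow]; push_cast; ring
    rw [h1, Real.norm_eq_abs, Real.norm_eq_abs, abs_mul, abs_mul, abs_mul, abs_abs]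
    have h2 : |(2:ℝ)| = 2 := by norm_num
    rw [h2]
    exact le_of_eq (by ring)

lemma continuous_mul_log_sq : Continuous fun s : ℝ => s * Real.log (s ^ 2) := by
  rw [continuous_iff_continuousAt]
  intro x
  rcases eq_or_ne x 0 with rfl | hx
  · unfold ContinuousAt
    simpa using tendsto_mul_log_sq
  · have h1 : ContinuousAt (fun s : ℝ => s ^ 2) x := (continuous_pow 2).continuousAt
    have h2 : ContinuousAt (fun s : ℝ => Real.log (s ^ 2)) x :=
      h1.log (pow_ne_zero 2 hx)
    exact continuousAt_id.mul h2

/-- The function `F₁` (recall `Real.log 0 = 0`, implementing `0 · log 0 = 0`). -/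
def F1 (δ : ℝ) (s : ℝ) : ℝ :=
  if |s| ≤ δ then -(1 / 2) * s ^ 2 * Real.log (s ^ 2)
  else -(1 / 2) * s ^ 2 * (Real.log (δ ^ 2) + 3) + 2 * δ * |s| - (1 / 2) * δ ^ 2

lemma F1_main (δ : ℝ) (hδ0 : 0 < δ) (hδe : δ ≤ Real.exp (-(3/2 : ℝ))) :
    ConvexOn ℝ Set.univ (F1 δ) ∧ (∀ s, 0 ≤ F1 δ s) ∧ ContDiff ℝ 1 (F1 δ) := by
  have hL : Real.log (δ ^ 2) + 3 ≤ 0 := by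
    have h1 : Real.log δ ≤ -(3/2 : ℝ) := by
      calc Real.log δ ≤ Real.log (Real.exp (-(3/2:ℝ))) := Real.log_le_log hδ0 hδe
        _ = -(3/2:ℝ) := Real.log_exp _
    have h2 : Real.log (δ ^ 2) = 2 * Real.log δ := by
      rw [Real.log_pow]; push_cast; ring
    linarith
  have hδ1 : δ < 1 := by
    calc δ ≤ Real.exp (-(3/2:ℝ)) := hδe
      _ < 1 := Real.exp_lt_one_iff.mpr (by norm_num)
  -- the candidate derivative
  set φ : ℝ → ℝ := fun s =>
    -s * (Real.log (min |s| δ ^ 2) + 1) - 2 * (s - max (-δ) (min δ s)) with hφdef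
  have hφ_le : ∀ s : ℝ, |s| ≤ δ → φ s = -s * (Real.log (s ^ 2) + 1) := by
    intro s hs
    have h1 : min |s| δ = |s| := min_eq_left hs
    have h2 : min δ s = s := min_eq_right ((le_abs_self s).trans hs)
    have h3 : max (-δ) s = s := max_eq_right (by
      have := neg_abs_le s; linarith [neg_le_neg hs])
    rw [hφdef]
    simp only [h1, h2, h3, sq_abs]
    ring
  have hφ_ge : ∀ s : ℝ, δ ≤ s → φ s = -s * (Real.log (δ ^ 2) + 3) + 2 * δ := by
    intro s hs
    have habs : |s| = s := abs_of_nonneg (hδ0.le.trans hs)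
    have h1 : min |s| δ = δ := min_eq_right (by rw [habs]; exact hs)
    have h2 : min δ s = δ := min_eq_left hs
    have h3 : max (-δ) δ = δ := max_eq_right (by linarith)
    rw [hφdef]
    simp only [h1, h2, h3]
    ring
  have hφ_odd : ∀ s : ℝ, φ (-s) = -φ s := by
    intro s
    have hclamp : max (-δ) (min δ (-s)) = -max (-δ) (min δ s) := by
      rcases le_total δ s with h | h <;> rcases le_total s (-δ) with h' | h' <;>
        simp [min_def, max_def] <;> split_ifs <;> linarith
    rw [hφdef]
    simp only [abs_neg, hclamp]
    ring
  have hφ0 : φ 0 = 0 := by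
    rw [hφ_le 0 (by simpa using hδ0.le)]; simp
  -- derivative of the inner formula away from 0
  have hinner : ∀ x : ℝ, x ≠ 0 →
      HasDerivAt (fun s : ℝ => -(1 / 2) * s ^ 2 * Real.log (s ^ 2))
        (-x * (Real.log (x ^ 2) + 1)) x := by
    intro x hx
    have hx2 : x ^ 2 ≠ 0 := pow_ne_zero 2 hx
    have h1 : HasDerivAt (fun s : ℝ => s ^ 2) (2 * x) x := by
      simpa using hasDerivAt_pow 2 x
    have h2 : HasDerivAt (fun s : ℝ => Real.log (s ^ 2)) ((2 * x) / (x ^ 2)) x :=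
      h1.log hx2
    have h3 := (h1.mul h2).const_mul (-(1/2) : ℝ)
    have h4 : HasDerivAt (fun s : ℝ => -(1 / 2) * s ^ 2 * Real.log (s ^ 2))
        (-(1/2) * (2 * x * Real.log (x ^ 2) + x ^ 2 * ((2 * x) / (x ^ 2)))) x := by
      refine h3.congr_of_eventuallyEq (Filter.Eventually.of_forall fun s => by simp only [Pi.mul_apply]; ring)
    convert h4 using 1
    field_simp
  -- derivative of s * log s^2 away from 0
  have hslog : ∀ x : ℝ, x ≠ 0 →
      HasDerivAt (fun s : ℝ => s * Real.log (s ^ 2)) (Real.log (x ^ 2) + 2) x := by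
    intro x hx
    have hx2 : x ^ 2 ≠ 0 := pow_ne_zero 2 hx
    have h1 : HasDerivAt (fun s : ℝ => s ^ 2) (2 * x) x := by
      simpa using hasDerivAt_pow 2 x
    have h2 : HasDerivAt (fun s : ℝ => Real.log (s ^ 2)) ((2 * x) / (x ^ 2)) x :=
      h1.log hx2
    have h3 := (hasDerivAt_id' x).mul h2
    refine h3.congr_deriv ?_
    · have h5 : x * (2 * x / x ^ 2) = 2 := by rw [mul_div_assoc', div_eq_iff hx2]; ring
      rw [h5]; ring
  -- derivative of the outer polynomial
  have houter : ∀ x : ℝ,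
      HasDerivAt (fun s : ℝ => -(1 / 2) * s ^ 2 * (Real.log (δ ^ 2) + 3) + 2 * δ * s - (1 / 2) * δ ^ 2)
        (-x * (Real.log (δ ^ 2) + 3) + 2 * δ) x := by
    intro x
    have h1 : HasDerivAt (fun s : ℝ => s ^ 2) (2 * x) x := by
      simpa using hasDerivAt_pow 2 x
    have h2 := ((h1.const_mul (-(1/2) * (Real.log (δ ^ 2) + 3))).add
      ((hasDerivAt_id x).const_mul (2 * δ))).sub_const ((1/2) * δ ^ 2)
    have h3 := h2.congr_of_eventuallyEq (f₁ := fun s : ℝ =>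
      -(1 / 2) * s ^ 2 * (Real.log (δ ^ 2) + 3) + 2 * δ * s - (1 / 2) * δ ^ 2)
      (Filter.Eventually.of_forall fun s => by simp only [id_eq, Pi.add_apply]; ring)
    exact h3.congr_deriv (by ring)
  -- F1 is even
  have hFeven : ∀ s : ℝ, F1 δ (-s) = F1 δ s := by
    intro s
    simp [F1, abs_neg, neg_sq]
  -- F1 has derivative φ everywhere
  have hF1deriv : ∀ x : ℝ, HasDerivAt (F1 δ) (φ x) x := by
    have hpos : ∀ x : ℝ, 0 ≤ x → HasDerivAt (F1 δ) (φ x) x := by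
      intro x hx0
      rcases lt_trichotomy x δ with hxδ | hxδ | hgt
      · -- 0 ≤ x < δ : inner region
        have hev : F1 δ =ᶠ[nhds x] fun s : ℝ => -(1 / 2) * s ^ 2 * Real.log (s ^ 2) := by
          have hmem : ∀ᶠ s : ℝ in nhds x, |s| < δ := by
            have hopen : IsOpen {s : ℝ | |s| < δ} := isOpen_lt continuous_abs continuous_const
            exact hopen.eventually_mem (by simpa [Set.mem_setOf_eq, abs_of_nonneg hx0] using hxδ)
          filter_upwards [hmem] with s hs
          simp only [F1, if_pos hs.le]
        rcases eq_or_lt_of_le hx0 with rfl | hx0'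
        · -- x = 0
          have hin : HasDerivAt (fun s : ℝ => -(1 / 2) * s ^ 2 * Real.log (s ^ 2)) 0 0 := by
            rw [hasDerivAt_iff_tendsto_slope]
            have h2 : Filter.Tendsto (fun s : ℝ => -(1/2) * (s * Real.log (s ^ 2)))
                (nhdsWithin 0 {(0:ℝ)}ᶜ) (nhds 0) := by
              have := tendsto_mul_log_sq.const_mul (-(1/2) : ℝ)
              simpa using this.mono_left nhdsWithin_le_nhds
            refine Filter.Tendsto.congr' ?_ h2
            filter_upwards [self_mem_nhdsWithin] with s hs
            have hs' : (s : ℝ) ≠ 0 := hs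
            rw [slope_def_field]
            field_simp
            ring
          rw [hφ0]
          exact hin.congr_of_eventuallyEq hev
        · -- 0 < x < δ
          have h := (hinner x (ne_of_gt hx0')).congr_of_eventuallyEq hev
          rw [hφ_le x (by rw [abs_of_pos hx0']; exact hxδ.le)]
          exact h
      · -- x = δ : boundary
        rw [hxδ]
        have hvalδ : F1 δ δ = -(1 / 2) * δ ^ 2 * Real.log (δ ^ 2) := by
          simp only [F1, if_pos (le_of_eq (abs_of_pos hδ0))]
        have hIic : HasDerivWithinAt (F1 δ) (-δ * (Real.log (δ ^ 2) + 1)) (Set.Iic δ) δ := by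
          have h1 := (hinner δ hδ0.ne').hasDerivWithinAt (s := Set.Iic δ)
          have heq : F1 δ =ᶠ[nhdsWithin δ (Set.Iic δ)]
              fun s : ℝ => -(1 / 2) * s ^ 2 * Real.log (s ^ 2) := by
            have hmem : ∀ᶠ s : ℝ in nhdsWithin δ (Set.Iic δ), 0 < s := by
              apply Filter.Eventually.filter_mono nhdsWithin_le_nhds
              exact (isOpen_lt continuous_const continuous_id).eventually_mem
                (by simpa [Set.mem_setOf_eq] using hδ0)
            filter_upwards [hmem, self_mem_nhdsWithin] with s hs hs'
            have habs : |s| ≤ δ := by rw [abs_of_pos hs]; exact hs'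
            simp only [F1, if_pos habs]
          exact h1.congr_of_eventuallyEq heq hvalδ
        have hIci : HasDerivWithinAt (F1 δ) (-δ * (Real.log (δ ^ 2) + 1)) (Set.Ici δ) δ := by
          have h1 := (houter δ).hasDerivWithinAt (s := Set.Ici δ)
          have heq : F1 δ =ᶠ[nhdsWithin δ (Set.Ici δ)]
              fun s : ℝ => -(1 / 2) * s ^ 2 * (Real.log (δ ^ 2) + 3) + 2 * δ * s
                - (1 / 2) * δ ^ 2 := by
            filter_upwards [self_mem_nhdsWithin] with s hs
            have hs0 : 0 < s := lt_of_lt_of_le hδ0 hs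
            have habs : |s| = s := abs_of_pos hs0
            by_cases hcase : |s| ≤ δ
            · have hsδ : s = δ := le_antisymm (habs ▸ hcase) hs
              rw [hsδ, hvalδ]
              ring
            · simp only [F1, if_neg hcase]
              rw [habs]
          have hval2 : F1 δ δ = -(1 / 2) * δ ^ 2 * (Real.log (δ ^ 2) + 3) + 2 * δ * δ
              - (1 / 2) * δ ^ 2 := by
            rw [hvalδ]; ring
          have h2 := h1.congr_of_eventuallyEq heq hval2
          exact h2.congr_deriv (by ring)
        have hglue := hIic.union hIci
        rw [Set.Iic_union_Ici, hasDerivWithinAt_univ] at hglue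
        rw [hφ_le δ (le_of_eq (abs_of_pos hδ0))]
        exact hglue
      · -- x > δ : outer region
        have hev : F1 δ =ᶠ[nhds x]
            fun s : ℝ => -(1 / 2) * s ^ 2 * (Real.log (δ ^ 2) + 3) + 2 * δ * s
              - (1 / 2) * δ ^ 2 := by
          have hmem : ∀ᶠ s : ℝ in nhds x, δ < s :=
            (isOpen_lt continuous_const continuous_id).eventually_mem
              (by simpa [Set.mem_setOf_eq] using hgt)
          filter_upwards [hmem] with s hs
          have habs : |s| = s := abs_of_pos (hδ0.trans hs)
          have hns : ¬ |s| ≤ δ := by rw [habs]; exact not_le.mpr hs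
          simp only [F1, if_neg hns]
          rw [habs]
        have h := (houter x).congr_of_eventuallyEq hev
        rw [hφ_ge x hgt.le]
        exact h
    intro x
    rcases le_or_gt 0 x with hx | hx
    · exact hpos x hx
    · have h := hpos (-x) (by linarith)
      have h2 := h.comp x (hasDerivAt_neg x)
      have h3 : HasDerivAt (F1 δ) (φ (-x) * (-1)) x := by
        refine h2.congr_of_eventuallyEq (Filter.Eventually.of_forall fun s => ?_)
        simp [Function.comp, hFeven]
      have h4 : φ (-x) * (-1) = φ x := by rw [hφ_odd]; ring
      rwa [h4] at h3
  have hdiff : Differentiable ℝ (F1 δ) := fun x => (hF1deriv x).differentiableAt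
  have hderiv_eq : deriv (F1 δ) = φ := funext fun x => (hF1deriv x).deriv
  -- continuity of φ
  have hφcont : Continuous φ := by
    have hclamp : Continuous fun s : ℝ => s - max (-δ) (min δ s) :=
      continuous_id.sub (continuous_const.max (continuous_const.min continuous_id))
    rw [continuous_iff_continuousAt]
    intro x
    rcases eq_or_ne x 0 with rfl | hx
    · have hc : ContinuousAt (fun s : ℝ => -s * (Real.log (s ^ 2) + 1)) 0 := by
        have h1 : Continuous fun s : ℝ => -(s * Real.log (s ^ 2)) - s :=
          continuous_mul_log_sq.neg.sub continuous_id
        have h2 : (fun s : ℝ => -s * (Real.log (s ^ 2) + 1))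
            = fun s : ℝ => -(s * Real.log (s ^ 2)) - s := by funext s; ring
        rw [h2]; exact h1.continuousAt
      have hmem : ∀ᶠ s : ℝ in nhds 0, |s| < δ := by
        have hopen : IsOpen {s : ℝ | |s| < δ} := isOpen_lt continuous_abs continuous_const
        exact hopen.eventually_mem (by simpa [Set.mem_setOf_eq] using hδ0)
      refine hc.congr ?_
      filter_upwards [hmem] with s hs
      exact (hφ_le s hs.le).symm
    · have hminpos : 0 < min |x| δ := lt_min (abs_pos.mpr hx) hδ0
      have hmin : ContinuousAt (fun s : ℝ => min |s| δ) x :=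
        (continuous_abs.min continuous_const).continuousAt
      have hlog : ContinuousAt (fun s : ℝ => Real.log (min |s| δ ^ 2)) x :=
        (hmin.pow 2).log (pow_ne_zero 2 hminpos.ne')
      rw [hφdef]
      exact (continuousAt_id.neg.mul (hlog.add continuousAt_const)).sub
        (hclamp.continuousAt.const_mul 2)
  -- derivative of φ inside (0, δ)
  have hmono_inner : ∀ x : ℝ, 0 < x → x < δ →
      HasDerivAt φ (-(Real.log (x ^ 2)) - 3) x := by
    intro x hx0 hxδ
    have hev : φ =ᶠ[nhds x] fun s : ℝ => -s * (Real.log (s ^ 2) + 1) := by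
      have hmem : ∀ᶠ s : ℝ in nhds x, |s| < δ := by
        have hopen : IsOpen {s : ℝ | |s| < δ} := isOpen_lt continuous_abs continuous_const
        exact hopen.eventually_mem (by simpa [Set.mem_setOf_eq, abs_of_pos hx0] using hxδ)
      filter_upwards [hmem] with s hs
      exact hφ_le s hs.le
    have h1 := hslog x (ne_of_gt hx0)
    have h2 := (h1.const_mul (-1 : ℝ)).sub (hasDerivAt_id x)
    have h3 : HasDerivAt (fun s : ℝ => -s * (Real.log (s ^ 2) + 1))
        (-(Real.log (x ^ 2)) - 3) x := by
      have h4 := h2.congr_of_eventuallyEq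
        (f₁ := fun s : ℝ => -s * (Real.log (s ^ 2) + 1))
        (Filter.Eventually.of_forall fun s => by simp only [id_eq, Pi.sub_apply]; ring)
      exact h4.congr_deriv (by ring)
    exact h3.congr_of_eventuallyEq hev
  -- monotonicity of φ
  have hmonoIcc : MonotoneOn φ (Set.Icc 0 δ) := by
    refine monotoneOn_of_deriv_nonneg (convex_Icc 0 δ) hφcont.continuousOn ?_ ?_
    · rw [interior_Icc]
      intro x hx
      exact ((hmono_inner x hx.1 hx.2).differentiableAt).differentiableWithinAt
    · rw [interior_Icc]
      intro x hx
      rw [(hmono_inner x hx.1 hx.2).deriv]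
      have hx2 : Real.log (x ^ 2) ≤ Real.log (δ ^ 2) := by
        apply Real.log_le_log (pow_pos hx.1 2)
        nlinarith [hx.1, hx.2]
      linarith
  have hkey : ∀ a b : ℝ, 0 ≤ a → a ≤ b → φ a ≤ φ b := by
    intro a b ha hab
    rcases le_total b δ with h | h
    · exact hmonoIcc ⟨ha, hab.trans h⟩ ⟨ha.trans hab, h⟩ hab
    · rcases le_total a δ with h' | h'
      · have s1 : φ a ≤ φ δ := hmonoIcc ⟨ha, h'⟩ ⟨hδ0.le, le_rfl⟩ h'
        have s2 : φ δ ≤ φ b := by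
          rw [hφ_ge δ le_rfl, hφ_ge b h]
          nlinarith
        linarith
      · rw [hφ_ge a h', hφ_ge b (h'.trans hab)]
        nlinarith
  have hφmono : Monotone φ := by
    intro a b hab
    rcases le_or_gt 0 a with ha | ha
    · exact hkey a b ha hab
    · rcases le_or_gt b 0 with hb | hb
      · have h0 := hkey (-b) (-a) (by linarith) (by linarith)
        have h1 := hφ_odd a
        have h2 := hφ_odd b
        linarith
      · have h1 := hφ_odd a
        have h2 := hkey 0 b le_rfl hb.le
        have h3 := hkey 0 (-a) le_rfl (by linarith)
        linarith [hφ0]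
  refine ⟨Monotone.convexOn_univ_of_deriv hdiff (hderiv_eq ▸ hφmono), ?_,
    contDiff_one_iff_deriv.mpr ⟨hdiff, hderiv_eq ▸ hφcont⟩⟩
  -- nonnegativity
  intro s
  unfold F1
  split_ifs with h
  · have h1 : s ^ 2 ≤ 1 := by nlinarith [abs_nonneg s, sq_abs s]
    have h2 : Real.log (s ^ 2) ≤ 0 := Real.log_nonpos (by positivity) h1
    nlinarith [mul_nonneg (sq_nonneg s) (neg_nonneg.mpr h2)]
  · push_neg at h
    have h2 : (0:ℝ) ≤ -(Real.log (δ ^ 2) + 3) := by linarith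
    have h3 : δ ≤ |s| := h.le
    nlinarith [mul_nonneg (sq_nonneg s) h2, mul_le_mul_of_nonneg_left h3 hδ0.le, sq_nonneg δ]

/-- For all sufficiently small `δ > 0`, `F₁` is convex, nonnegative and `C¹`. -/
theorem F1_convex_nonneg_contDiff :
    ∃ δ₀ : ℝ, δ₀ ∈ Set.Ioo (0 : ℝ) 1 ∧ ∀ δ ∈ Set.Ioc (0 : ℝ) δ₀,
      ConvexOn ℝ Set.univ (F1 δ) ∧ (∀ s, 0 ≤ F1 δ s) ∧ ContDiff ℝ 1 (F1 δ) := by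
  refine ⟨Real.exp (-(3/2 : ℝ)), ⟨Real.exp_pos _, Real.exp_lt_one_iff.mpr (by norm_num)⟩, ?_⟩
  intro δ hδ
  exact F1_main δ hδ.1 hδ.2
end
end

section
/- For every δ > 0, with F₁ and F₂ defined as below, one has F₂(s) − F₁(s) = ½ s² log s² for all s ∈ ℝ, and F₂ is continuously differentiable on ℝ. -/
open Real

noncomputable section

/-- The function `F₂`. -/
def F2 (δ : ℝ) (s : ℝ) : ℝ :=
  if |s| ≤ δ then 0
  else (1 / 2) * s ^ 2 * Real.log (s ^ 2 / δ ^ 2) + 2 * δ * |s| - (3 / 2) * s ^ 2 -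
    (1 / 2) * δ ^ 2

def F2' (δ : ℝ) (s : ℝ) : ℝ :=
  s * Real.log (max (s ^ 2) (δ ^ 2) / δ ^ 2) - 2 * (s - max (min s δ) (-δ))

lemma hasDerivAt_aux (δ c : ℝ) (hδ : δ ≠ 0) (t : ℝ) (ht : t ≠ 0) :
    HasDerivAt (fun t : ℝ => (1 / 2) * t ^ 2 * Real.log (t ^ 2 / δ ^ 2) + c * t -
      (3 / 2) * t ^ 2 - (1 / 2) * δ ^ 2)
      (t * Real.log (t ^ 2 / δ ^ 2) - 2 * t + c) t := by
  have A : HasDerivAt (fun t : ℝ => t ^ 2) (2 * t) t := by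
    simpa using hasDerivAt_pow 2 t
  have B : HasDerivAt (fun t : ℝ => t ^ 2 / δ ^ 2) (2 * t / δ ^ 2) t := A.div_const _
  have hne : t ^ 2 / δ ^ 2 ≠ 0 := div_ne_zero (pow_ne_zero 2 ht) (pow_ne_zero 2 hδ)
  have C := B.log hne
  have D : HasDerivAt (fun t : ℝ => (1 / 2) * t ^ 2) ((1 / 2) * (2 * t)) t := A.const_mul _
  have E := D.mul C
  have F : HasDerivAt (fun t : ℝ => c * t) (c * 1) t := (hasDerivAt_id t).const_mul c
  have G := ((E.add F).sub (A.const_mul (3 / 2))).sub_const ((1 / 2) * δ ^ 2)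
  convert G using 1
  case e'_9 =>
    field_simp
    ring
  all_goals rfl

lemma F2_eq_pos (δ : ℝ) (hδ : 0 < δ) {t : ℝ} (ht : δ ≤ t) :
    F2 δ t = (1 / 2) * t ^ 2 * Real.log (t ^ 2 / δ ^ 2) + 2 * δ * t -
      (3 / 2) * t ^ 2 - (1 / 2) * δ ^ 2 := by
  rcases eq_or_lt_of_le ht with rfl | ht'
  · simp only [F2, abs_of_pos hδ, if_pos le_rfl, div_self (pow_ne_zero 2 hδ.ne'),
      Real.log_one]
    ring
  · have h1 : ¬ |t| ≤ δ := by rw [abs_of_pos (by linarith)]; linarith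
    simp only [F2, if_neg h1]
    rw [abs_of_pos (by linarith)]

lemma F2_eq_neg (δ : ℝ) (hδ : 0 < δ) {t : ℝ} (ht : t ≤ -δ) :
    F2 δ t = (1 / 2) * t ^ 2 * Real.log (t ^ 2 / δ ^ 2) + -(2 * δ) * t -
      (3 / 2) * t ^ 2 - (1 / 2) * δ ^ 2 := by
  rcases eq_or_lt_of_le ht with rfl | ht'
  · have : |(-δ)| ≤ δ := by rw [abs_neg, abs_of_pos hδ]
    simp only [F2, if_pos this]
    rw [show ((-δ : ℝ) ^ 2) = δ ^ 2 by ring, div_self (pow_ne_zero 2 hδ.ne'), Real.log_one]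
    ring
  · have h1 : ¬ |t| ≤ δ := by rw [abs_of_neg (by linarith)]; linarith
    simp only [F2, if_neg h1]
    rw [abs_of_neg (by linarith)]
    ring

lemma key (δ : ℝ) (hδ : 0 < δ) (s : ℝ) : HasDerivAt (F2 δ) (F2' δ s) s := by
  rcases lt_trichotomy |s| δ with h | h | h
  · -- interior: |s| < δ
    have hs : s ^ 2 ≤ δ ^ 2 := by nlinarith [sq_abs s, abs_nonneg s]
    have habs := abs_lt.mp h
    have hg : F2' δ s = 0 := by
      rw [F2', max_eq_right hs, div_self (by positivity), Real.log_one,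
        min_eq_left habs.2.le, max_eq_left (by linarith)]
      ring
    rw [hg]
    have hev : F2 δ =ᶠ[nhds s] fun _ => 0 := by
      have hopen : IsOpen {t : ℝ | |t| < δ} := isOpen_lt continuous_abs continuous_const
      filter_upwards [hopen.mem_nhds h] with t ht
      simp [F2, le_of_lt ht]
    exact (hasDerivAt_const s (0 : ℝ)).congr_of_eventuallyEq hev
  · -- boundary |s| = δ
    rcases (abs_eq hδ.le).mp h with h1 | h1 <;> rw [h1]
    · -- s = δ
      have hg : F2' δ δ = 0 := by
        rw [F2', max_self, div_self (by positivity), Real.log_one, min_self,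
          max_eq_left (by linarith)]
        ring
      rw [hg]
      have left : HasDerivWithinAt (F2 δ) 0 (Set.Iic δ) δ := by
        have hc : HasDerivWithinAt (fun _ : ℝ => (0:ℝ)) 0 (Set.Iic δ) δ :=
          (hasDerivAt_const δ (0 : ℝ)).hasDerivWithinAt
        refine hc.congr_of_eventuallyEq ?_ (by simp [F2, abs_of_pos hδ])
        have h1 : Set.Ioi (-δ) ∈ nhdsWithin δ (Set.Iic δ) :=
          nhdsWithin_le_nhds (Ioi_mem_nhds (by linarith))
        filter_upwards [h1, self_mem_nhdsWithin] with t h1 h2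
        simp [F2, abs_le.mpr ⟨(Set.mem_Ioi.mp h1).le, Set.mem_Iic.mp h2⟩]
      have right : HasDerivWithinAt (F2 δ) 0 (Set.Ici δ) δ := by
        have hd := hasDerivAt_aux δ (2 * δ) hδ.ne' δ hδ.ne'
        rw [div_self (by positivity), Real.log_one] at hd
        have hd0 : HasDerivAt (fun t : ℝ => (1 / 2) * t ^ 2 * Real.log (t ^ 2 / δ ^ 2)
            + 2 * δ * t - (3 / 2) * t ^ 2 - (1 / 2) * δ ^ 2) 0 δ := by
          convert hd using 1; ring
        exact hd0.hasDerivWithinAt.congr (fun y hy => F2_eq_pos δ hδ hy)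
          (F2_eq_pos δ hδ le_rfl)
      have u := left.union right
      rw [Set.Iic_union_Ici] at u
      exact hasDerivWithinAt_univ.mp u
    · -- s = -δ
      have hg : F2' δ (-δ) = 0 := by
        rw [F2', show ((-δ : ℝ) ^ 2) = δ ^ 2 by ring, max_self, div_self (by positivity),
          Real.log_one, min_eq_left (by linarith), max_self]
        ring
      rw [hg]
      have right : HasDerivWithinAt (F2 δ) 0 (Set.Ici (-δ)) (-δ) := by
        have hc : HasDerivWithinAt (fun _ : ℝ => (0:ℝ)) 0 (Set.Ici (-δ)) (-δ) :=
          (hasDerivAt_const (-δ) (0 : ℝ)).hasDerivWithinAt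
        refine hc.congr_of_eventuallyEq ?_ (by simp [F2, abs_of_pos hδ])
        have h1 : Set.Iio δ ∈ nhdsWithin (-δ) (Set.Ici (-δ)) :=
          nhdsWithin_le_nhds (Iio_mem_nhds (by linarith))
        filter_upwards [h1, self_mem_nhdsWithin] with t h1 h2
        simp [F2, abs_le.mpr ⟨Set.mem_Ici.mp h2, (Set.mem_Iio.mp h1).le⟩]
      have left : HasDerivWithinAt (F2 δ) 0 (Set.Iic (-δ)) (-δ) := by
        have hd := hasDerivAt_aux δ (-(2 * δ)) hδ.ne' (-δ) (by simp [hδ.ne'])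
        rw [show ((-δ : ℝ) ^ 2) = δ ^ 2 by ring, div_self (by positivity),
          Real.log_one] at hd
        have hd0 : HasDerivAt (fun t : ℝ => (1 / 2) * t ^ 2 * Real.log (t ^ 2 / δ ^ 2)
            + -(2 * δ) * t - (3 / 2) * t ^ 2 - (1 / 2) * δ ^ 2) 0 (-δ) := by
          convert hd using 1; ring
        exact hd0.hasDerivWithinAt.congr (fun y hy => F2_eq_neg δ hδ hy)
          (F2_eq_neg δ hδ le_rfl)
      have u := left.union right
      rw [Set.Iic_union_Ici] at u
      exact hasDerivWithinAt_univ.mp u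
  · -- exterior |s| > δ
    have hs2 : δ ^ 2 ≤ s ^ 2 := by nlinarith [sq_abs s, abs_nonneg s]
    rcases lt_or_gt_of_ne (show s ≠ 0 by intro h0; rw [h0, abs_zero] at h; linarith)
      with hneg | hpos
    · -- s < -δ
      have hsd : s < -δ := by have := abs_of_neg hneg ▸ h; linarith
      have hg : F2' δ s = s * Real.log (s ^ 2 / δ ^ 2) - 2 * s + -(2 * δ) := by
        rw [F2', max_eq_left hs2, min_eq_left (by linarith), max_eq_right hsd.le]
        ring
      rw [hg]
      have hd := hasDerivAt_aux δ (-(2 * δ)) hδ.ne' s (by linarith)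
      have hev : (fun t : ℝ => (1 / 2) * t ^ 2 * Real.log (t ^ 2 / δ ^ 2) + -(2 * δ) * t -
          (3 / 2) * t ^ 2 - (1 / 2) * δ ^ 2) =ᶠ[nhds s] F2 δ := by
        filter_upwards [(isOpen_Iio (a := -δ)).mem_nhds hsd] with t ht
        exact (F2_eq_neg δ hδ (le_of_lt ht)).symm
      exact hd.congr_of_eventuallyEq hev.symm
    · -- s > δ
      have hsd : δ < s := by have := abs_of_pos hpos ▸ h; linarith
      have hg : F2' δ s = s * Real.log (s ^ 2 / δ ^ 2) - 2 * s + 2 * δ := by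
        rw [F2', max_eq_left hs2, min_eq_right hsd.le, max_eq_left (by linarith)]
        ring
      rw [hg]
      have hd := hasDerivAt_aux δ (2 * δ) hδ.ne' s (by linarith)
      have hev : (fun t : ℝ => (1 / 2) * t ^ 2 * Real.log (t ^ 2 / δ ^ 2) + 2 * δ * t -
          (3 / 2) * t ^ 2 - (1 / 2) * δ ^ 2) =ᶠ[nhds s] F2 δ := by
        filter_upwards [(isOpen_Ioi (a := δ)).mem_nhds hsd] with t ht
        exact (F2_eq_pos δ hδ (le_of_lt ht)).symm
      exact hd.congr_of_eventuallyEq hev.symm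

lemma continuous_F2' (δ : ℝ) (hδ : 0 < δ) : Continuous (F2' δ) := by
  have h1 : Continuous fun s : ℝ => max (s ^ 2) (δ ^ 2) / δ ^ 2 :=
    ((continuous_pow 2).max continuous_const).div_const _
  have h2 : ∀ s : ℝ, max (s ^ 2) (δ ^ 2) / δ ^ 2 ≠ 0 := fun s =>
    ne_of_gt (div_pos (lt_max_of_lt_right (by positivity)) (by positivity))
  exact (continuous_id.mul (h1.log h2)).sub
    (continuous_const.mul (continuous_id.sub ((continuous_id.min continuous_const).max
      continuous_const)))

/-- `F₂ − F₁ = ½ s² log s²` and `F₂` is `C¹`. -/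
theorem F2_sub_F1_and_contDiff (δ : ℝ) (hδ : 0 < δ) :
    (∀ s : ℝ, F2 δ s - F1 δ s = (1 / 2) * s ^ 2 * Real.log (s ^ 2)) ∧
      ContDiff ℝ 1 (F2 δ) := by
  constructor
  · intro s
    by_cases h : |s| ≤ δ
    · simp only [F1, F2, if_pos h]
      ring
    · have hs : s ≠ 0 := by
        intro h0; rw [h0, abs_zero] at h; exact h hδ.le
      simp only [F1, F2, if_neg h]
      rw [Real.log_div (pow_ne_zero 2 hs) (pow_ne_zero 2 hδ.ne')]
      ring
  · rw [contDiff_one_iff_deriv]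
    constructor
    · exact fun s => (key δ hδ s).differentiableAt
    · have : deriv (F2 δ) = F2' δ := funext fun s => (key δ hδ s).deriv
      rw [this]
      exact continuous_F2' δ hδ
end
end
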